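/- A point x* ∈ ℝ^{n×p} is an optimal solution of the consensus optimization problem min_{x∈ℝ^{n×p}} Σ_{i=1}^n h_i(x_i) subject to x_1 = x_2 = ⋯ = x_n, if and only if there exist a matrix q* ∈ ℝ^{(n−1)×p} and a matrix D ∈ ℝ^{n×p} whose i-th row is a subgradient of h_i at x*_i, such that D + c Uᵀ q* = 0 and U x* = 0. -/

import Mathlib

open Matrix

noncomputable section

/-- `d` is a subgradient of `h` at `x`. -/
def IsSubgradAt {p : ℕ} (h : (Fin p → ℝ) → ℝ) (d x : Fin p → ℝ) : Prop :=
  ∀ y, h x + d ⬝ᵥ (y - x) ≤ h y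

private lemma auxA {a b β : ℝ} (hβ : β < 0) (H : ∀ ε : ℝ, 0 < ε → a + ε * β < b) : a ≤ b := by
  by_contra hab
  push_neg at hab
  have hε : 0 < (b - a) / (2 * β) := div_pos_of_neg_of_neg (by linarith) (by linarith)
  have h3 := H _ hε
  have h4 : (b - a) / (2 * β) * β = (b - a) / 2 := by
    have hβne : β ≠ 0 := hβ.ne
    field_simp
  rw [h4] at h3; linarith

private lemma auxB {a b γ : ℝ} (hγ : 0 < γ) (H : ∀ ε : ℝ, 0 < ε → a < b + ε * γ) : a ≤ b := by
  refine auxA (show -γ < 0 by linarith) (fun ε hε => ?_)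
  have h1 := H ε hε
  have h2 : ε * -γ = -(ε * γ) := by ring
  linarith

private lemma convexOn_fin_sum {p k : ℕ} (h : Fin k → (Fin p → ℝ) → ℝ)
    (hc : ∀ i, ConvexOn ℝ Set.univ (h i)) :
    ConvexOn ℝ Set.univ (fun y => ∑ i, h i y) := by
  refine ⟨convex_univ, fun x _ y _ a b ha hb hab => ?_⟩
  simp only [smul_eq_mul, Finset.mul_sum]
  calc ∑ i, h i (a • x + b • y) ≤ ∑ i, (a * h i x + b * h i y) :=
        Finset.sum_le_sum fun i _ => by
          simpa using (hc i).2 (Set.mem_univ x) (Set.mem_univ y) ha hb hab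
    _ = (∑ i, a * h i x) + ∑ i, b * h i y := Finset.sum_add_distrib

private lemma concaveOn_dot {p : ℕ} (w : Fin p → ℝ) :
    ConcaveOn ℝ Set.univ (fun y : Fin p → ℝ => w ⬝ᵥ y) := by
  refine ⟨convex_univ, fun x _ y _ a b _ _ _ => le_of_eq ?_⟩
  simp [dotProduct_add, dotProduct_smul, smul_eq_mul]

/-- Decomposition of a minimizer of a sum of two convex functions into subgradients. -/
private lemma exists_subgrad_decomp {p : ℕ} {f g : (Fin p → ℝ) → ℝ}
    (hf : ConvexOn ℝ Set.univ f) (hg : ConvexOn ℝ Set.univ g)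
    (z : Fin p → ℝ) (hmin : ∀ y, f z + g z ≤ f y + g y) :
    ∃ d, IsSubgradAt f d z ∧ IsSubgradAt g (-d) z := by
  have hfc : Continuous f :=
    continuousOn_univ.mp (hf.continuousOn isOpen_univ)
  have hgc : Continuous g :=
    continuousOn_univ.mp (hg.continuousOn isOpen_univ)
  set A : Set ((Fin p → ℝ) × ℝ) := {yt | f yt.1 - f z < yt.2} with hAdef
  set B : Set ((Fin p → ℝ) × ℝ) := {yt | yt.2 < g z - g yt.1} with hBdef
  have hAo : IsOpen A :=
    isOpen_lt ((hfc.comp continuous_fst).sub continuous_const) continuous_snd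
  have hBo : IsOpen B :=
    isOpen_lt continuous_snd (continuous_const.sub (hgc.comp continuous_fst))
  have hAc : Convex ℝ A := by
    rintro ⟨y1, t1⟩ h1 ⟨y2, t2⟩ h2 a b ha hb hab
    simp only [hAdef, Set.mem_setOf_eq] at h1 h2 ⊢
    have h3 := hf.2 (Set.mem_univ y1) (Set.mem_univ y2) ha hb hab
    simp only [smul_eq_mul, Prod.fst_add, Prod.snd_add, Prod.smul_mk] at *
    have key : a * (f y1 - f z) + b * (f y2 - f z) < a * t1 + b * t2 := by
      rcases lt_or_eq_of_le ha with hpa | hpa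
      · have k1 := mul_lt_mul_of_pos_left h1 hpa
        have k2 := mul_le_mul_of_nonneg_left h2.le hb
        nlinarith
      · have hb1 : b = 1 := by rw [← hpa] at hab; linarith
        have k2 := mul_lt_mul_of_pos_left h2 (show (0:ℝ) < b by rw [hb1]; norm_num)
        rw [← hpa]
        nlinarith
    have e1 : a * (f y1 - f z) = a * f y1 - a * f z := by ring
    have e2 : b * (f y2 - f z) = b * f y2 - b * f z := by ring
    have e3 : a * f z + b * f z = f z := by rw [← add_mul, hab, one_mul]
    linarith
  have hBc : Convex ℝ B := by
    rintro ⟨y1, t1⟩ h1 ⟨y2, t2⟩ h2 a b ha hb hab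
    simp only [hBdef, Set.mem_setOf_eq] at h1 h2 ⊢
    have h3 := hg.2 (Set.mem_univ y1) (Set.mem_univ y2) ha hb hab
    simp only [smul_eq_mul, Prod.fst_add, Prod.snd_add, Prod.smul_mk] at *
    have key : a * t1 + b * t2 < a * (g z - g y1) + b * (g z - g y2) := by
      rcases lt_or_eq_of_le ha with hpa | hpa
      · have k1 := mul_lt_mul_of_pos_left h1 hpa
        have k2 := mul_le_mul_of_nonneg_left h2.le hb
        nlinarith
      · have hb1 : b = 1 := by rw [← hpa] at hab; linarith
        have k2 := mul_lt_mul_of_pos_left h2 (show (0:ℝ) < b by rw [hb1]; norm_num)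
        rw [← hpa]
        nlinarith
    have e1 : a * (g z - g y1) = a * g z - a * g y1 := by ring
    have e2 : b * (g z - g y2) = b * g z - b * g y2 := by ring
    have e3 : a * g z + b * g z = g z := by rw [← add_mul, hab, one_mul]
    linarith
  have hdisj : Disjoint A B := by
    rw [Set.disjoint_left]
    rintro ⟨y, t⟩ h1 h2
    simp only [hAdef, hBdef, Set.mem_setOf_eq] at h1 h2
    have := hmin y
    linarith
  obtain ⟨L, s, hLA, hLB⟩ := geometric_hahn_banach_open_open hAc hAo hBc hBo hdisj
  set β : ℝ := L (0, 1) with hβdef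
  have hsplit : ∀ (y : Fin p → ℝ) (t : ℝ), L (y, t) = L (y, 0) + t * β := by
    intro y t
    have h1 : ((y, t) : (Fin p → ℝ) × ℝ) = (y, (0:ℝ)) + t • ((0 : Fin p → ℝ), (1:ℝ)) := by
      simp [Prod.ext_iff]
    rw [h1, map_add, _root_.map_smul, smul_eq_mul]
  have hAz : ∀ ε : ℝ, 0 < ε → L (z, 0) + ε * β < s := by
    intro ε hε
    have hm : ((z, ε) : (Fin p → ℝ) × ℝ) ∈ A := by
      simp only [hAdef, Set.mem_setOf_eq]; linarith
    have := hLA _ hm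
    rwa [hsplit] at this
  have hBz : ∀ ε : ℝ, 0 < ε → s < L (z, 0) + (-ε) * β := by
    intro ε hε
    have hm : ((z, -ε) : (Fin p → ℝ) × ℝ) ∈ B := by
      simp only [hBdef, Set.mem_setOf_eq]; linarith
    have := hLB _ hm
    rwa [hsplit] at this
  have hβ : β < 0 := by
    have h1 := hAz 1 one_pos
    have h2 := hBz 1 one_pos
    nlinarith
  have hles : L (z, 0) ≤ s := auxA hβ hAz
  have hsle : s ≤ L (z, 0) := by
    refine auxB (show (0:ℝ) < -β by linarith) (fun ε hε => ?_)
    have h1 := hBz ε hε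
    have h2 : (-ε) * β = ε * -β := by ring
    linarith
  -- linear functional on the first coordinate
  set ψ : (Fin p → ℝ) →ₗ[ℝ] ℝ := L.toLinearMap.comp (LinearMap.inl ℝ (Fin p → ℝ) ℝ) with hψdef
  have hψ : ∀ y, ψ y = L (y, 0) := fun y => rfl
  set d : Fin p → ℝ := fun i => ψ (fun j => if i = j then 1 else 0) / (-β) with hddef
  have hφ : ∀ v, d ⬝ᵥ v = ψ v / (-β) := by
    intro v
    rw [LinearMap.pi_apply_eq_sum_univ ψ v, Finset.sum_div]
    refine Finset.sum_congr rfl fun i _ => ?_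
    rw [smul_eq_mul]
    simp only [hddef]
    ring
  have key_f : ∀ y, ψ y + (f y - f z) * β ≤ ψ z := by
    intro y
    rw [hψ, hψ]
    refine auxA hβ (fun ε hε => ?_)
    have hm : ((y, f y - f z + ε) : (Fin p → ℝ) × ℝ) ∈ A := by
      simp only [hAdef, Set.mem_setOf_eq]; linarith
    have h1 := hLA _ hm
    rw [hsplit] at h1
    have h2 : (f y - f z + ε) * β = (f y - f z) * β + ε * β := by ring
    linarith
  have key_g : ∀ y, ψ z ≤ ψ y + (g z - g y) * β := by
    intro y
    rw [hψ, hψ]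
    refine auxB (show (0:ℝ) < -β by linarith) (fun ε hε => ?_)
    have hm : ((y, g z - g y - ε) : (Fin p → ℝ) × ℝ) ∈ B := by
      simp only [hBdef, Set.mem_setOf_eq]; linarith
    have h1 := hLB _ hm
    rw [hsplit] at h1
    have h2 : (g z - g y - ε) * β = (g z - g y) * β + ε * -β := by ring
    linarith
  have hB' : (0:ℝ) < -β := by linarith
  refine ⟨d, ?_, ?_⟩
  · intro y
    have h1 := key_f y
    rw [hφ, map_sub]
    have h2 : (ψ y - ψ z) / (-β) ≤ f y - f z := by
      rw [div_le_iff₀ hB']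
      nlinarith
    linarith
  · intro y
    have h1 := key_g y
    rw [neg_dotProduct, hφ, map_sub]
    have h2 : -((ψ y - ψ z) / (-β)) ≤ g y - g z := by
      rw [neg_le, le_div_iff₀ hB']
      nlinarith
    linarith

/-- Subdifferential sum rule (existence direction), by induction on the number of functions. -/
private lemma sum_rule {p : ℕ} :
    ∀ (k : ℕ) (h : Fin k → (Fin p → ℝ) → ℝ), (∀ i, ConvexOn ℝ Set.univ (h i)) →
      ∀ (z d : Fin p → ℝ), (∀ y, (∑ i, h i z) + d ⬝ᵥ (y - z) ≤ ∑ i, h i y) →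
        ∃ D : Fin k → (Fin p → ℝ), (∀ i, IsSubgradAt (h i) (D i) z) ∧ ∑ i, D i = d := by
  intro k
  induction k with
  | zero =>
    intro h _ z d hd
    refine ⟨fun _ => 0, fun i => i.elim0, ?_⟩
    have h1 := hd (z + d)
    simp only [Finset.univ_eq_empty, Finset.sum_empty, zero_add, add_sub_cancel_left] at h1
    have h2 : d ⬝ᵥ d = 0 :=
      le_antisymm h1 (Finset.sum_nonneg fun i _ => mul_self_nonneg _)
    have h3 := dotProduct_self_eq_zero.mp h2
    simp [h3]
  | succ k ih =>
    intro h hconv z d hd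
    set f : (Fin p → ℝ) → ℝ := fun y => h 0 y - d ⬝ᵥ y with hfdef
    set g : (Fin p → ℝ) → ℝ := fun y => ∑ i : Fin k, h i.succ y with hgdef
    have hfconv : ConvexOn ℝ Set.univ f := (hconv 0).sub (concaveOn_dot d)
    have hgconv : ConvexOn ℝ Set.univ g :=
      convexOn_fin_sum _ (fun i => hconv i.succ)
    have hmin : ∀ y, f z + g z ≤ f y + g y := by
      intro y
      have h1 := hd y
      rw [Fin.sum_univ_succ, Fin.sum_univ_succ] at h1
      have h2 : d ⬝ᵥ (y - z) = d ⬝ᵥ y - d ⬝ᵥ z := dotProduct_sub d y z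
      simp only [hfdef, hgdef]
      linarith
    obtain ⟨e, hef, heg⟩ := exists_subgrad_decomp hfconv hgconv z hmin
    obtain ⟨D', hD', hsum⟩ := ih (fun i => h i.succ) (fun i => hconv i.succ) z (-e) heg
    refine ⟨Fin.cons (e + d) D', ?_, ?_⟩
    · intro i
      refine Fin.cases ?_ (fun i => ?_) i
      · intro y
        have h1 := hef y
        simp only [hfdef] at h1
        have h2 : d ⬝ᵥ (y - z) = d ⬝ᵥ y - d ⬝ᵥ z := dotProduct_sub d y z
        have h3 : (e + d) ⬝ᵥ (y - z) = e ⬝ᵥ (y - z) + d ⬝ᵥ (y - z) :=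
          add_dotProduct e d (y - z)
        rw [Fin.cons_zero]
        linarith
      · intro y
        simpa [Fin.cons_succ] using hD' i y
    · rw [Fin.sum_univ_succ]
      simp only [Fin.cons_zero, Fin.cons_succ]
      rw [hsum]
      abel

/-- Surjectivity of `Uᵀ` onto the sum-zero subspace. -/
private lemma exists_preimage (n : ℕ) (hn : 2 ≤ n)
    (U : Matrix (Fin (n - 1)) (Fin n) ℝ)
    (hU : ∀ v : Fin n → ℝ, U.mulVec v = 0 ↔ ∃ a : ℝ, v = fun _ => a)
    (v : Fin n → ℝ) (hv : ∑ i, v i = 0) : ∃ w : Fin (n - 1) → ℝ, Uᵀ.mulVec w = v := by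
  classical
  set A := Uᵀ.mulVecLin with hAdef
  set f : (Fin n → ℝ) →ₗ[ℝ] ℝ :=
    { toFun := fun u => ∑ i, u i
      map_add' := fun u w => by simp [Finset.sum_add_distrib]
      map_smul' := fun a u => by simp [Finset.mul_sum] } with hfdef
  set S := LinearMap.ker f with hSdef
  have hone : U.mulVec (fun _ => 1) = 0 := (hU _).mpr ⟨1, rfl⟩
  have hrowsum : ∀ j, ∑ i, U j i = 0 := by
    intro j
    have := congrFun hone j
    simpa [mulVec, dotProduct] using this
  have hle : LinearMap.range A ≤ S := by
    rintro _ ⟨w, rfl⟩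
    show f (A w) = 0
    simp only [hAdef, hfdef, mulVecLin_apply, mulVec, dotProduct, transpose_apply,
      LinearMap.coe_mk, AddHom.coe_mk]
    rw [Finset.sum_comm]
    rw [Finset.sum_eq_zero]
    intro j _
    rw [← Finset.sum_mul, hrowsum j, zero_mul]
  have hne : (fun _ => (1:ℝ) : Fin n → ℝ) ≠ 0 := by
    intro hcon
    have := congrFun hcon ⟨0, by omega⟩
    simp at this
  have hker : LinearMap.ker U.mulVecLin = Submodule.span ℝ {(fun _ => 1 : Fin n → ℝ)} := by
    ext u
    rw [LinearMap.mem_ker, mulVecLin_apply, Submodule.mem_span_singleton, hU]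
    constructor
    · rintro ⟨a, rfl⟩
      exact ⟨a, by funext i; simp⟩
    · rintro ⟨a, rfl⟩
      exact ⟨a, by funext i; simp⟩
  have hkerdim : Module.finrank ℝ (LinearMap.ker U.mulVecLin) = 1 := by
    rw [hker]; exact finrank_span_singleton hne
  have hdim : Module.finrank ℝ (Fin n → ℝ) = n := by
    rw [Module.finrank_pi]; simp
  have hrangeU : Module.finrank ℝ (LinearMap.range U.mulVecLin) = n - 1 := by
    have h1 := LinearMap.finrank_range_add_finrank_ker U.mulVecLin
    rw [hkerdim, hdim] at h1
    omega
  have hrangeA : Module.finrank ℝ (LinearMap.range A) = n - 1 := by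
    have h1 : (Uᵀ).rank = U.rank := Matrix.rank_transpose U
    have h2 : (Uᵀ).rank = Module.finrank ℝ (LinearMap.range A) := rfl
    have h3 : U.rank = Module.finrank ℝ (LinearMap.range U.mulVecLin) := rfl
    rw [h2, h3, hrangeU] at h1
    exact h1
  have hfsurj : LinearMap.range f = ⊤ := by
    rw [LinearMap.range_eq_top]
    intro r
    refine ⟨fun _ => r / n, ?_⟩
    simp only [hfdef, LinearMap.coe_mk, AddHom.coe_mk, Finset.sum_const, Finset.card_univ,
      Fintype.card_fin, nsmul_eq_mul]
    field_simp
  have hSfin : Module.finrank ℝ S = n - 1 := by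
    have h1 := LinearMap.finrank_range_add_finrank_ker f
    rw [hfsurj, hdim, finrank_top, ← hSdef] at h1
    simp only [Module.finrank_self] at h1
    omega
  have hEq : LinearMap.range A = S :=
    Submodule.eq_of_le_of_finrank_eq hle (hrangeA.trans hSfin.symm)
  have hvS : v ∈ S := by
    show f v = 0
    exact hv
  rw [← hEq] at hvS
  obtain ⟨w, hw⟩ := hvS
  exact ⟨w, hw⟩

/-- First-order optimality conditions for the consensus optimization problem
`min Σᵢ hᵢ(xᵢ) s.t. x₁ = x₂ = ⋯ = xₙ` (Lemma 2). -/
theorem stmt_1 (n p : ℕ) (hn : 2 ≤ n) (hp : 1 ≤ p)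
    (c : ℝ) (hc : c ≠ 0)
    (U : Matrix (Fin (n - 1)) (Fin n) ℝ)
    (hU : ∀ v : Fin n → ℝ, U.mulVec v = 0 ↔ ∃ a : ℝ, v = fun _ => a)
    (h : Fin n → (Fin p → ℝ) → ℝ)
    (hconv : ∀ i, ConvexOn ℝ Set.univ (h i))
    (xs : Matrix (Fin n) (Fin p) ℝ) :
    -- `xs` is an optimal solution of the consensus optimization problem
    ((∀ i j : Fin n, xs i = xs j) ∧
      ∀ x : Matrix (Fin n) (Fin p) ℝ,
        (∀ i j : Fin n, x i = x j) →
          ∑ i, h i (xs i) ≤ ∑ i, h i (x i))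
    ↔
    (∃ (q : Matrix (Fin (n - 1)) (Fin p) ℝ) (D : Matrix (Fin n) (Fin p) ℝ),
      (∀ i, IsSubgradAt (h i) (D i) (xs i)) ∧
      D + c • (Uᵀ * q) = 0 ∧
      U * xs = 0) := by
  classical
  have hone : U.mulVec (fun _ => 1) = 0 := (hU _).mpr ⟨1, rfl⟩
  have hrowsum : ∀ j, ∑ i, U j i = 0 := by
    intro j
    have := congrFun hone j
    simpa [mulVec, dotProduct] using this
  have i0 : Fin n := ⟨0, by omega⟩
  constructor
  · rintro ⟨heq, hopt⟩
    set z : Fin p → ℝ := xs i0 with hzdef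
    have hzi : ∀ i, xs i = z := fun i => heq i i0
    have hglobal : ∀ y, (∑ i, h i z) + (0 : Fin p → ℝ) ⬝ᵥ (y - z) ≤ ∑ i, h i y := by
      intro y
      have h1 := hopt (fun _ => y) (fun i j => rfl)
      have h2 : ∑ i, h i (xs i) = ∑ i, h i z :=
        Finset.sum_congr rfl fun i _ => by rw [hzi i]
      rw [zero_dotProduct, add_zero, ← h2]
      exact h1
    obtain ⟨D, hDsub, hDsum⟩ := sum_rule n h hconv z 0 hglobal
    -- build q
    have hcol : ∀ k : Fin p, ∑ i, (-(c⁻¹) * D i k) = 0 := by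
      intro k
      have h1 : ∑ i, D i k = 0 := by
        have := congrFun hDsum k
        simpa [Finset.sum_apply] using this
      rw [← Finset.mul_sum, h1, mul_zero]
    have hpre : ∀ k : Fin p, ∃ w : Fin (n - 1) → ℝ,
        Uᵀ.mulVec w = fun i => -(c⁻¹) * D i k := fun k =>
      exists_preimage n hn U hU _ (hcol k)
    choose w hw using hpre
    refine ⟨Matrix.of fun j k => w k j, Matrix.of fun i k => D i k, ?_, ?_, ?_⟩
    · intro i
      show IsSubgradAt (h i) (D i) (xs i)
      rw [hzi i]
      exact hDsub i
    · funext i k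
      have h1 : (Uᵀ * Matrix.of fun j k => w k j) i k = Uᵀ.mulVec (w k) i := by
        simp [mul_apply, mulVec, dotProduct]
      have h2 := congrFun (hw k) i
      simp only [Matrix.add_apply, Matrix.smul_apply, smul_eq_mul, Matrix.zero_apply]
      rw [h1, h2]
      field_simp
      simp [Matrix.of_apply]
    · funext r k
      have h1 : U.mulVec (fun i => xs i k) = 0 :=
        (hU _).mpr ⟨z k, funext fun i => congrFun (hzi i) k⟩
      have h2 := congrFun h1 r
      simpa [mul_apply, mulVec, dotProduct] using h2
  · rintro ⟨q, D, hDsub, hzero, hUxs⟩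
    have hcolconst : ∀ k : Fin p, ∃ a : ℝ, (fun i => xs i k) = fun _ => a := by
      intro k
      refine (hU _).mp ?_
      funext r
      have := congrFun (congrFun hUxs r) k
      simpa [mul_apply, mulVec, dotProduct] using this
    have heq : ∀ i j : Fin n, xs i = xs j := by
      intro i j
      funext k
      obtain ⟨a, ha⟩ := hcolconst k
      have h1 := congrFun ha i
      have h2 := congrFun ha j
      rw [h1, h2]
    refine ⟨heq, ?_⟩
    -- column sums of D vanish
    have hDsum : ∀ k : Fin p, ∑ i, D i k = 0 := by
      intro k
      have h1 : ∀ i, D i k = -(c * ∑ j, U j i * q j k) := by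
        intro i
        have := congrFun (congrFun hzero i) k
        simp only [Matrix.add_apply, Matrix.smul_apply, Matrix.zero_apply, smul_eq_mul,
          mul_apply, transpose_apply] at this
        linarith
      calc ∑ i, D i k = ∑ i, ∑ j, -(c * q j k) * U j i := by
            refine Finset.sum_congr rfl fun i _ => ?_
            rw [h1 i, Finset.mul_sum, ← Finset.sum_neg_distrib]
            exact Finset.sum_congr rfl fun j _ => by ring
        _ = ∑ j, -(c * q j k) * ∑ i, U j i := by
            rw [Finset.sum_comm]
            exact Finset.sum_congr rfl fun j _ => (Finset.mul_sum _ _ _).symm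
        _ = 0 := Finset.sum_eq_zero fun j _ => by rw [hrowsum j, mul_zero]
    intro x hx
    have h1 : ∀ i : Fin n, h i (xs i) + D i ⬝ᵥ (x i0 - xs i0) ≤ h i (x i) := by
      intro i
      have t := hDsub i (x i)
      have e : x i - xs i = x i0 - xs i0 := by rw [hx i i0, heq i i0]
      rwa [e] at t
    have h2 : ∑ i, (h i (xs i) + D i ⬝ᵥ (x i0 - xs i0)) ≤ ∑ i, h i (x i) :=
      Finset.sum_le_sum fun i _ => h1 i
    have h3 : ∑ i, (h i (xs i) + D i ⬝ᵥ (x i0 - xs i0))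
        = (∑ i, h i (xs i)) + ∑ i, D i ⬝ᵥ (x i0 - xs i0) := Finset.sum_add_distrib
    have h4 : ∑ i, D i ⬝ᵥ (x i0 - xs i0) = 0 := by
      have h5 : ∑ i, D i ⬝ᵥ (x i0 - xs i0) = (∑ i, D i) ⬝ᵥ (x i0 - xs i0) := by
        simp only [dotProduct, Finset.sum_apply]
        rw [Finset.sum_comm]
        exact Finset.sum_congr rfl fun k _ => by rw [show (∑ i, D i) k = ∑ i, D i k from Finset.sum_apply k _ _, Finset.sum_mul]
      rw [h5]
      have h6 : (∑ i, D i) = 0 := by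
        funext k
        have := hDsum k
        exact (Finset.sum_apply k _ _).trans this
      rw [h6, zero_dotProduct]
    linarith [h2, h3.symm ▸ h2]
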